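/- Let x_0 be the family with (x_0)_{−j;i} = −C_{−j;i} for all j ≥ 1 and 1 ≤ i ≤ n. Then σ_{−j;i}(x_0) ≤ 0 for every j ≥ 1 and 1 ≤ i ≤ n. (Hence the vector (…,0,0,t_λ,−C_{−1;n},−C_{−1;n−1},…,−C_{−j;i},…) is a highest weight vector of the crystal ℤ^∞_ι[λ], as asserted in Theorem 5.2.) -/

import Mathlib

noncomputable section

/-- `C_{−j;i} = max(0, −λ_{i−j+1}, −λ_{i−j+1}−λ_{i−j+2}, …,
−λ_{i−j+1}−⋯−λ_{n−j+1})` if `1 ≤ j ≤ i ≤ n`, and `0` otherwise. -/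
def CA (lam : ℤ → ℤ) (n j i : ℤ) : ℤ :=
  if 1 ≤ j ∧ j ≤ i ∧ i ≤ n then
    (Finset.Icc (i - j + 1) (n - j + 1)).fold max 0
      (fun m => -(∑ t ∈ Finset.Icc (i - j + 1) m, lam t))
  else 0

/-- The coordinate `x_{−j';i'}` of a family, with the convention that it is `0`
unless `1 ≤ i' ≤ n`. -/
def XA (n : ℤ) (x : ℤ → ℤ → ℤ) (j' i' : ℤ) : ℤ :=
  if 1 ≤ i' ∧ i' ≤ n then x j' i' else 0

/-- `σ_{−j;i}(x) = −λ_i + x_{−j;i} − x_{−j;i+1}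
+ Σ_{j'=1}^{j−1} (2 x_{−j';i} − x_{−j';i−1} − x_{−j';i+1})`;
here `x j i` denotes the coordinate `x_{−j;i}`. -/
def sigmaA (lam : ℤ → ℤ) (n : ℤ) (x : ℤ → ℤ → ℤ) (j i : ℤ) : ℤ :=
  -lam i + XA n x j i - XA n x j (i + 1) +
    ∑ j' ∈ Finset.Icc 1 (j - 1),
      (2 * XA n x j' i - XA n x j' (i - 1) - XA n x j' (i + 1))

end

section Aux

open Finset

private lemma IccIco (a b : ℤ) : Finset.Icc a b = Finset.Ico a (b + 1) := by
  ext x; simp [Int.lt_add_one_iff]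

private lemma sum_cat (f : ℤ → ℤ) {a b c : ℤ} (h1 : a - 1 ≤ b) (h2 : b ≤ c) :
    (∑ t ∈ Finset.Icc a b, f t) + (∑ t ∈ Finset.Icc (b + 1) c, f t)
      = ∑ t ∈ Finset.Icc a c, f t := by
  rw [IccIco, IccIco, IccIco,
    ← Finset.sum_union (Finset.Ico_disjoint_Ico_consecutive a (b + 1) (c + 1)),
    Finset.Ico_union_Ico_eq_Ico (by omega) (by omega)]

private lemma split_front (f : ℤ → ℤ) {a b : ℤ} (h : a ≤ b) :
    ∑ t ∈ Finset.Icc a b, f t = f a + ∑ t ∈ Finset.Icc (a + 1) b, f t := by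
  have := sum_cat f (show a - 1 ≤ a by omega) h
  rw [Finset.Icc_self, Finset.sum_singleton] at this
  exact this.symm

private lemma split_top (f : ℤ → ℤ) {a b : ℤ} (h : a ≤ b) :
    ∑ t ∈ Finset.Icc a b, f t = (∑ t ∈ Finset.Icc a (b - 1), f t) + f b := by
  have := sum_cat f (show a - 1 ≤ b - 1 by omega) (show b - 1 ≤ b by omega)
  rw [show b - 1 + 1 = b by ring, Finset.Icc_self, Finset.sum_singleton] at this
  exact this.symm

variable {n i0 : ℤ} {lam : ℤ → ℤ}

private lemma CA_nonneg (lam : ℤ → ℤ) (n j i : ℤ) : 0 ≤ CA lam n j i := by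
  unfold CA; split
  · exact (Finset.le_fold_max 0).2 (Or.inl le_rfl)
  · exact le_rfl

private lemma CA_zero {j i : ℤ} (h : ¬(1 ≤ j ∧ j ≤ i ∧ i ≤ n)) :
    CA lam n j i = 0 := if_neg h

private lemma CA_eq (hi0n : i0 ≤ n)
    (hpos : ∀ i : ℤ, 1 ≤ i → i ≤ i0 → 0 < lam i)
    (hneg : ∀ i : ℤ, i0 < i → i ≤ n → lam i ≤ 0)
    {j i : ℤ} (h1 : 1 ≤ j) (h2 : j ≤ i) (h3 : i ≤ n) :
    CA lam n j i = max 0 (-(∑ t ∈ Finset.Icc (i - j + 1) (n - j + 1), lam t)) := by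
  unfold CA
  rw [if_pos ⟨h1, h2, h3⟩]
  apply le_antisymm
  · rw [Finset.fold_max_le]
    refine ⟨le_max_left _ _, ?_⟩
    intro m hm
    simp only [Finset.mem_Icc] at hm
    rcases le_or_gt i0 m with hc | hc
    · have htail : (∑ t ∈ Finset.Icc (m + 1) (n - j + 1), lam t) ≤ 0 := by
        apply Finset.sum_nonpos
        intro t ht
        simp only [Finset.mem_Icc] at ht
        exact hneg t (by omega) (by omega)
      have hsplit := sum_cat lam (show (i - j + 1) - 1 ≤ m by omega) hm.2
      have hle : -(∑ t ∈ Finset.Icc (i - j + 1) m, lam t)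
          ≤ -(∑ t ∈ Finset.Icc (i - j + 1) (n - j + 1), lam t) := by omega
      exact le_trans hle (le_max_right _ _)
    · have hhead : 0 ≤ ∑ t ∈ Finset.Icc (i - j + 1) m, lam t := by
        apply Finset.sum_nonneg
        intro t ht
        simp only [Finset.mem_Icc] at ht
        exact le_of_lt (hpos t (by omega) (by omega))
      exact le_trans (by omega) (le_max_left _ _)
  · rw [max_le_iff]
    refine ⟨(Finset.le_fold_max 0).2 (Or.inl le_rfl), ?_⟩
    exact (Finset.le_fold_max _).2
      (Or.inr ⟨n - j + 1, Finset.mem_Icc.2 ⟨by omega, le_rfl⟩, le_rfl⟩)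

private lemma CA_eq' (hi0n : i0 ≤ n)
    (hpos : ∀ i : ℤ, 1 ≤ i → i ≤ i0 → 0 < lam i)
    (hneg : ∀ i : ℤ, i0 < i → i ≤ n → lam i ≤ 0)
    {j i : ℤ} (h1 : 1 ≤ j) (h2 : j ≤ i + 1) (h3 : i ≤ n) :
    CA lam n j (i + 1) = max 0 (-(∑ t ∈ Finset.Icc (i - j + 2) (n - j + 1), lam t)) := by
  rcases le_or_gt (i + 1) n with h | h
  · rw [CA_eq hi0n hpos hneg h1 h2 h, show i + 1 - j + 1 = i - j + 2 by ring]
  · have hin : i = n := by omega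
    subst hin
    rw [CA_zero (by omega), Finset.Icc_eq_empty (by omega), Finset.sum_empty]
    simp

private lemma XA_eq (lam : ℤ → ℤ) (n j' i' : ℤ) :
    XA n (fun j' i' => -CA lam n j' i') j' i' = -CA lam n j' i' := by
  unfold XA; split
  · rfl
  · rename_i h
    have hz : CA lam n j' i' = 0 :=
      CA_zero (fun hh => h ⟨le_trans hh.1 hh.2.1, hh.2.2⟩)
    simp [hz]

private lemma sigma_eq (lam : ℤ → ℤ) (n j i : ℤ) :
    sigmaA lam n (fun j' i' => -CA lam n j' i') j i =
      -lam i - CA lam n j i + CA lam n j (i + 1) +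
        ∑ j' ∈ Finset.Icc 1 (j - 1),
          (CA lam n j' (i - 1) + CA lam n j' (i + 1) - 2 * CA lam n j' i) := by
  unfold sigmaA
  simp only [XA_eq]
  have hs : ∑ j' ∈ Finset.Icc 1 (j - 1),
      (2 * -CA lam n j' i - -CA lam n j' (i - 1) - -CA lam n j' (i + 1)) =
      ∑ j' ∈ Finset.Icc 1 (j - 1),
      (CA lam n j' (i - 1) + CA lam n j' (i + 1) - 2 * CA lam n j' i) := by
    refine Finset.sum_congr rfl fun x _ => by ring
  rw [hs]
  ring

private lemma claimD (hi0n : i0 ≤ n)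
    (hpos : ∀ i : ℤ, 1 ≤ i → i ≤ i0 → 0 < lam i)
    (hneg : ∀ i : ℤ, i0 < i → i ≤ n → lam i ≤ 0)
    {j i : ℤ} (hj : 1 ≤ j) (hi : 1 ≤ i) (hin : i ≤ n) :
    CA lam n (j + 1) (i + 1) + CA lam n j (i - 1)
      ≤ CA lam n (j + 1) i + CA lam n j i := by
  rcases lt_or_ge i j with hlt | hle
  · -- i < j : both LHS terms vanish
    rw [CA_zero (by omega), CA_zero (by omega)]
    have h1 := CA_nonneg lam n (j + 1) i
    have h2 := CA_nonneg lam n j i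
    omega
  · rcases eq_or_lt_of_le hle with heq | hlt2
    · -- j = i
      subst heq
      rw [CA_zero (show ¬(1 ≤ j ∧ j ≤ j - 1 ∧ j - 1 ≤ n) by omega)]
      rcases le_or_gt (j + 1) n with hjn | hjn
      · rw [CA_eq hi0n hpos hneg (show (1:ℤ) ≤ j + 1 by omega) le_rfl hjn,
          show j + 1 - (j + 1) + 1 = (1:ℤ) by ring,
          show n - (j + 1) + 1 = n - j by ring,
          CA_eq hi0n hpos hneg hj le_rfl hin,
          show j - j + 1 = (1:ℤ) by ring]
        rw [split_top lam (show (1:ℤ) ≤ n - j + 1 by omega),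
          show n - j + 1 - 1 = n - j by ring]
        have h1 := CA_nonneg lam n (j + 1) j
        have hkey : lam (n - j + 1) ≤ 0 ∨ 0 ≤ ∑ t ∈ Finset.Icc 1 (n - j), lam t := by
          rcases le_or_gt (lam (n - j + 1)) 0 with h | h
          · exact Or.inl h
          · refine Or.inr (Finset.sum_nonneg fun t ht => ?_)
            simp only [Finset.mem_Icc] at ht
            have hto : n - j + 1 ≤ i0 := by
              by_contra hc
              push_neg at hc
              have := hneg (n - j + 1) hc (by omega)
              omega
            exact le_of_lt (hpos t (by omega) (by omega))
        omega
      · rw [CA_zero (by omega)]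
        have h1 := CA_nonneg lam n (j + 1) j
        have h2 := CA_nonneg lam n j j
        omega
    · -- j < i, i.e. j ≤ i - 1 : all four in closed form
      have e1 : CA lam n j (i - 1)
          = max 0 (-(∑ t ∈ Finset.Icc (i - j) (n - j + 1), lam t)) := by
        rw [CA_eq hi0n hpos hneg hj (by omega) (by omega),
          show i - 1 - j + 1 = i - j by ring]
      have e2 : CA lam n j i
          = max 0 (-(∑ t ∈ Finset.Icc (i - j + 1) (n - j + 1), lam t)) :=
        CA_eq hi0n hpos hneg hj (by omega) hin
      have e3 : CA lam n (j + 1) i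
          = max 0 (-(∑ t ∈ Finset.Icc (i - j) (n - j), lam t)) := by
        rw [CA_eq hi0n hpos hneg (by omega) (by omega) hin,
          show i - (j + 1) + 1 = i - j by ring,
          show n - (j + 1) + 1 = n - j by ring]
      have e4 : CA lam n (j + 1) (i + 1)
          = max 0 (-(∑ t ∈ Finset.Icc (i - j + 1) (n - j), lam t)) := by
        rw [CA_eq' hi0n hpos hneg (by omega) (by omega) hin,
          show i - (j + 1) + 2 = i - j + 1 by ring,
          show n - (j + 1) + 1 = n - j by ring]
      rw [e1, e2, e3, e4]
      have s1 : ∑ t ∈ Finset.Icc (i - j) (n - j), lam t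
          = lam (i - j) + ∑ t ∈ Finset.Icc (i - j + 1) (n - j), lam t :=
        split_front lam (by omega)
      have s2 : ∑ t ∈ Finset.Icc (i - j + 1) (n - j + 1), lam t
          = (∑ t ∈ Finset.Icc (i - j + 1) (n - j), lam t) + lam (n - j + 1) := by
        have h := split_top lam (show i - j + 1 ≤ n - j + 1 by omega)
        rw [show n - j + 1 - 1 = n - j by ring] at h
        exact h
      have s3 : ∑ t ∈ Finset.Icc (i - j) (n - j + 1), lam t
          = lam (i - j) + ((∑ t ∈ Finset.Icc (i - j + 1) (n - j), lam t)
              + lam (n - j + 1)) := by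
        rw [split_front lam (show i - j ≤ n - j + 1 by omega), s2]
      rw [s1, s2, s3]
      set S0 := ∑ t ∈ Finset.Icc (i - j + 1) (n - j), lam t with hS0
      set μ := lam (i - j) with hμ
      set ν := lam (n - j + 1) with hν
      have hsign : (0 ≤ μ ∧ ν ≤ 0) ∨ (μ ≤ 0 ∧ 0 ≤ ν)
          ∨ (μ ≤ 0 ∧ ν ≤ 0 ∧ S0 ≤ 0) ∨ (0 ≤ μ ∧ 0 ≤ ν ∧ 0 ≤ S0) := by
        rcases le_or_gt μ 0 with hμ0 | hμ0 <;> rcases le_or_gt ν 0 with hν0 | hν0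
        · -- μ ≤ 0, ν ≤ 0 : S0 ≤ 0
          refine Or.inr (Or.inr (Or.inl ⟨hμ0, hν0, ?_⟩))
          have hij : i0 < i - j := by
            by_contra hc
            push_neg at hc
            have := hpos (i - j) (by omega) hc
            omega
          refine Finset.sum_nonpos fun t ht => ?_
          simp only [Finset.mem_Icc] at ht
          exact hneg t (by omega) (by omega)
        · exact Or.inr (Or.inl ⟨hμ0, le_of_lt hν0⟩)
        · exact Or.inl ⟨le_of_lt hμ0, hν0⟩
        · -- 0 < μ, 0 < ν : 0 ≤ S0
          refine Or.inr (Or.inr (Or.inr ⟨le_of_lt hμ0, le_of_lt hν0, ?_⟩))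
          have hij : i - j ≤ i0 := by
            by_contra hc
            push_neg at hc
            have := hneg (i - j) hc (by omega)
            omega
          have hnj : n - j + 1 ≤ i0 := by
            by_contra hc
            push_neg at hc
            have := hneg (n - j + 1) hc (by omega)
            omega
          refine Finset.sum_nonneg fun t ht => ?_
          simp only [Finset.mem_Icc] at ht
          exact le_of_lt (hpos t (by omega) (by omega))
      omega

end Aux

/-- Type `A_n`: for an integral weight `λ = Σ λ_i Λ_i` with
`λ_1,…,λ_{i_0} > 0` and `λ_{i_0+1},…,λ_n ≤ 0`, the vector `x₀` with
coordinates `(x₀)_{−j;i} = −C_{−j;i}` satisfies `σ_{−j;i}(x₀) ≤ 0` for all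
`j ≥ 1`, `1 ≤ i ≤ n`; hence `(…,0,0,t_λ,−C_{−1;n},…,−C_{−j;i},…)` is a
highest weight vector of `ℤ^∞_ι[λ]` (Hoshino–Nakashima, Theorem 5.2). -/
theorem sigma_nonpos_at_minus_C_A_n
    (n : ℤ) (hn : 1 ≤ n) (lam : ℤ → ℤ) (i0 : ℤ) (hi0 : 0 ≤ i0) (hi0n : i0 ≤ n)
    (hpos : ∀ i : ℤ, 1 ≤ i → i ≤ i0 → 0 < lam i)
    (hneg : ∀ i : ℤ, i0 < i → i ≤ n → lam i ≤ 0) :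
    ∀ j i : ℤ, 1 ≤ j → 1 ≤ i → i ≤ n →
      sigmaA lam n (fun j' i' => -CA lam n j' i') j i ≤ 0 := by
  intro j i hj hi1 hin
  refine Int.le_induction (motive := fun j _ => sigmaA lam n (fun j' i' => -CA lam n j' i') j i ≤ 0) ?_ ?_ j hj
  · show sigmaA lam n (fun j' i' => -CA lam n j' i') 1 i ≤ 0
    rw [sigma_eq]
    rw [Finset.Icc_eq_empty (show ¬(1:ℤ) ≤ 1 - 1 by norm_num), Finset.sum_empty]
    rw [CA_eq hi0n hpos hneg le_rfl hi1 hin,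
      show i - 1 + 1 = i by ring, show n - 1 + 1 = n by ring,
      CA_eq' hi0n hpos hneg le_rfl (by omega) hin,
      show i - 1 + 2 = i + 1 by ring, show n - 1 + 1 = n by ring]
    rw [split_front lam hin]
    have hkey : 0 < lam i ∨ (lam i ≤ 0 ∧ (∑ t ∈ Finset.Icc (i + 1) n, lam t) ≤ 0) := by
      rcases le_or_gt (lam i) 0 with h | h
      · refine Or.inr ⟨h, ?_⟩
        have hii0 : i0 < i := by
          by_contra hc
          push_neg at hc
          have := hpos i hi1 hc
          omega
        refine Finset.sum_nonpos fun t ht => ?_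
        simp only [Finset.mem_Icc] at ht
        exact hneg t (by omega) (by omega)
      · exact Or.inl h
    omega
  · intro j hj ih
    show sigmaA lam n (fun j' i' => -CA lam n j' i') (j + 1) i ≤ 0
    change sigmaA lam n (fun j' i' => -CA lam n j' i') j i ≤ 0 at ih
    rw [sigma_eq] at ih ⊢
    rw [show j + 1 - 1 = j by ring]
    have hsum : (∑ j' ∈ Finset.Icc 1 j,
          (CA lam n j' (i - 1) + CA lam n j' (i + 1) - 2 * CA lam n j' i))
        = (∑ j' ∈ Finset.Icc 1 (j - 1),
            (CA lam n j' (i - 1) + CA lam n j' (i + 1) - 2 * CA lam n j' i))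
          + (CA lam n j (i - 1) + CA lam n j (i + 1) - 2 * CA lam n j i) :=
      split_top _ hj
    rw [hsum]
    have hD := claimD hi0n hpos hneg hj hi1 hin
    omega
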